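/- arXiv:2008.09458 — 3 statements merged into one kernel-verified Lean document; each statement's English description precedes it below -/
import Mathlib

section
/- Let (Ω, 𝒜, μ) be a measure space, let f₁, f₂, f₃ : Ω → ℝ be integrable functions, and let k₁, k₂ ∈ ℝ. Let Φ : Ω → ℝ be the indicator function of the measurable set S = {x ∈ Ω : f₃(x) > k₁ f₂(x) + k₂ f₁(x)}. Then for every measurable function ψ : Ω → ℝ with 0 ≤ ψ(x) ≤ 1 for all x, such that ψ·f₁, ψ·f₂, ψ·f₃ are integrable and ∫ ψ f₁ dμ = ∫ Φ f₁ dμ and ∫ ψ f₂ dμ = ∫ Φ f₂ dμ, one has ∫ ψ f₃ dμ ≤ ∫ Φ f₃ dμ. -/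
open MeasureTheory

/-- Generalized Neyman–Pearson auxiliary lemma with m = 2 constraints:
among all tests `ψ` (measurable, `[0,1]`-valued) meeting the two integral
constraints against `f₁` and `f₂`, the indicator `Φ` of the region where
`f₃` exceeds the linear combination `k₁ f₂ + k₂ f₁` maximizes the integral
against `f₃`. -/
theorem generalized_neyman_pearson_two_constraints
    {Ω : Type*} [MeasurableSpace Ω] (μ : Measure Ω)
    (f₁ f₂ f₃ : Ω → ℝ)
    (hf₁ : Integrable f₁ μ) (hf₂ : Integrable f₂ μ) (hf₃ : Integrable f₃ μ)
    (k₁ k₂ : ℝ)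
    (S : Set Ω) (hS : S = {x | f₃ x > k₁ * f₂ x + k₂ * f₁ x})
    (hSm : MeasurableSet S)
    (Φ : Ω → ℝ) (hΦ : Φ = S.indicator (fun _ => (1 : ℝ)))
    (ψ : Ω → ℝ) (hψm : Measurable ψ)
    (hψ0 : ∀ x, 0 ≤ ψ x) (hψ1 : ∀ x, ψ x ≤ 1)
    (hi1 : Integrable (fun x => ψ x * f₁ x) μ)
    (hi2 : Integrable (fun x => ψ x * f₂ x) μ)
    (hi3 : Integrable (fun x => ψ x * f₃ x) μ)
    (he1 : ∫ x, ψ x * f₁ x ∂μ = ∫ x, Φ x * f₁ x ∂μ)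
    (he2 : ∫ x, ψ x * f₂ x ∂μ = ∫ x, Φ x * f₂ x ∂μ) :
    ∫ x, ψ x * f₃ x ∂μ ≤ ∫ x, Φ x * f₃ x ∂μ := by
  -- Φ x * f x = S.indicator f x
  have hmul : ∀ f : Ω → ℝ, (fun x => Φ x * f x) = S.indicator f := by
    intro f
    funext x
    by_cases hx : x ∈ S <;> simp [hΦ, Set.indicator, hx]
  have hI1 : Integrable (fun x => Φ x * f₁ x) μ := by
    rw [hmul]; exact hf₁.indicator hSm
  have hI2 : Integrable (fun x => Φ x * f₂ x) μ := by
    rw [hmul]; exact hf₂.indicator hSm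
  have hI3 : Integrable (fun x => Φ x * f₃ x) μ := by
    rw [hmul]; exact hf₃.indicator hSm
  -- pointwise nonnegativity
  have hpt : ∀ x, 0 ≤ (Φ x - ψ x) * (f₃ x - (k₁ * f₂ x + k₂ * f₁ x)) := by
    intro x
    by_cases hx : x ∈ S
    · have h1 : 0 ≤ f₃ x - (k₁ * f₂ x + k₂ * f₁ x) := by
        have := hx; rw [hS] at this; simp only [Set.mem_setOf_eq] at this; linarith
      have h2 : 0 ≤ Φ x - ψ x := by
        simp [hΦ, Set.indicator, hx]; linarith [hψ1 x]
      exact mul_nonneg h2 h1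
    · have h1 : f₃ x - (k₁ * f₂ x + k₂ * f₁ x) ≤ 0 := by
        have := hx; rw [hS] at this; simp only [Set.mem_setOf_eq, not_lt] at this; linarith
      have h2 : Φ x - ψ x ≤ 0 := by
        simp [hΦ, Set.indicator, hx]; linarith [hψ0 x]
      nlinarith [mul_nonneg (neg_nonneg.2 h2) (neg_nonneg.2 h1)]
  -- the product function as a combination of integrable pieces
  have heq : (fun x => (Φ x - ψ x) * (f₃ x - (k₁ * f₂ x + k₂ * f₁ x)))
      = fun x => ((Φ x * f₃ x - ψ x * f₃ x) - k₁ * (Φ x * f₂ x - ψ x * f₂ x))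
        - k₂ * (Φ x * f₁ x - ψ x * f₁ x) := by
    funext x; ring
  have hint : Integrable (fun x => (Φ x - ψ x) * (f₃ x - (k₁ * f₂ x + k₂ * f₁ x))) μ := by
    rw [heq]
    exact (((hI3.sub hi3).sub ((hI2.sub hi2).const_mul k₁)).sub ((hI1.sub hi1).const_mul k₂))
  have h0 : 0 ≤ ∫ x, (Φ x - ψ x) * (f₃ x - (k₁ * f₂ x + k₂ * f₁ x)) ∂μ :=
    integral_nonneg hpt
  rw [heq] at h0
  rw [show (fun x => ((Φ x * f₃ x - ψ x * f₃ x) - k₁ * (Φ x * f₂ x - ψ x * f₂ x))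
        - k₂ * (Φ x * f₁ x - ψ x * f₁ x)) = (fun x => (Φ x * f₃ x - ψ x * f₃ x)
        - k₁ * (Φ x * f₂ x - ψ x * f₂ x) - k₂ * (Φ x * f₁ x - ψ x * f₁ x)) from rfl] at h0
  have hA : Integrable (fun x => Φ x * f₃ x - ψ x * f₃ x) μ := hI3.sub hi3
  have hB : Integrable (fun x => k₁ * (Φ x * f₂ x - ψ x * f₂ x)) μ :=
    (hI2.sub hi2).const_mul k₁
  have hC : Integrable (fun x => k₂ * (Φ x * f₁ x - ψ x * f₁ x)) μ :=
    (hI1.sub hi1).const_mul k₂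
  have hAB : Integrable (fun x => Φ x * f₃ x - ψ x * f₃ x
      - k₁ * (Φ x * f₂ x - ψ x * f₂ x)) μ := hA.sub hB
  have e1 : ∫ x, (Φ x * f₃ x - ψ x * f₃ x) ∂μ
      = ∫ x, Φ x * f₃ x ∂μ - ∫ x, ψ x * f₃ x ∂μ := integral_sub hI3 hi3
  have e2 : ∫ x, (Φ x * f₂ x - ψ x * f₂ x) ∂μ
      = ∫ x, Φ x * f₂ x ∂μ - ∫ x, ψ x * f₂ x ∂μ := integral_sub hI2 hi2
  have e3 : ∫ x, (Φ x * f₁ x - ψ x * f₁ x) ∂μ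
      = ∫ x, Φ x * f₁ x ∂μ - ∫ x, ψ x * f₁ x ∂μ := integral_sub hI1 hi1
  have d2 : ∫ x, k₁ * (Φ x * f₂ x - ψ x * f₂ x) ∂μ
      = k₁ * ∫ x, (Φ x * f₂ x - ψ x * f₂ x) ∂μ := integral_const_mul k₁ _
  have d3 : ∫ x, k₂ * (Φ x * f₁ x - ψ x * f₁ x) ∂μ
      = k₂ * ∫ x, (Φ x * f₁ x - ψ x * f₁ x) ∂μ := integral_const_mul k₂ _
  have eAB : ∫ x, (Φ x * f₃ x - ψ x * f₃ x - k₁ * (Φ x * f₂ x - ψ x * f₂ x)) ∂μ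
      = ∫ x, (Φ x * f₃ x - ψ x * f₃ x) ∂μ
        - ∫ x, k₁ * (Φ x * f₂ x - ψ x * f₂ x) ∂μ := integral_sub hA hB
  have eTot : ∫ x, (Φ x * f₃ x - ψ x * f₃ x - k₁ * (Φ x * f₂ x - ψ x * f₂ x)
        - k₂ * (Φ x * f₁ x - ψ x * f₁ x)) ∂μ
      = ∫ x, (Φ x * f₃ x - ψ x * f₃ x - k₁ * (Φ x * f₂ x - ψ x * f₂ x)) ∂μ
        - ∫ x, k₂ * (Φ x * f₁ x - ψ x * f₁ x) ∂μ := integral_sub hAB hC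
  rw [eTot, eAB, e1, d2, e2, d3, e3, he1, he2] at h0
  linarith
end

section
/- Let (Ω, 𝒜, μ) be a measure space, θ₀ ∈ ℝ, and let f : ℝ → Ω → ℝ be a family of functions such that f(θ₀, x) > 0 for all x, for each x the map θ ↦ f(θ, x) is twice differentiable at θ₀ (write f'(θ₀, x) and f''(θ₀, x) for the first and second derivatives in θ at θ₀), and f(θ₀, ·), f'(θ₀, ·), f''(θ₀, ·) are integrable. Fix κ̃₁ ∈ ℝ and κ̃₂ ∈ ℝ, and let Φ : Ω → ℝ be the indicator of the measurable set S = {x : f''(θ₀, x)/f(θ₀, x) > κ̃₂ · f'(θ₀, x)/f(θ₀, x) + κ̃₁}, i.e. the set where the LMPU statistic (∂²/∂θ² log f + (∂/∂θ log f)² − κ̃₂ ∂/∂θ log f)|_{θ=θ₀} exceeds κ̃₁. Then for every measurable ψ : Ω → ℝ with 0 ≤ ψ ≤ 1, such that ψ·f(θ₀,·), ψ·f'(θ₀,·), ψ·f''(θ₀,·) are integrable, ∫ ψ f(θ₀, ·) dμ = ∫ Φ f(θ₀, ·) dμ, and ∫ ψ f'(θ₀, ·) dμ = ∫ Φ f'(θ₀,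 ·) dμ, one has ∫ ψ f''(θ₀, ·) dμ ≤ ∫ Φ f''(θ₀, ·) dμ. -/
open MeasureTheory Topology Filter

/-- Theorem 1 of the paper (the LMPU test): among tests with prescribed size and
vanishing first-order power derivative at `θ₀`, the test thresholding the LMPU
statistic (equivalently, the indicator of `{x : f''/f > κ̃₂ f'/f + κ̃₁}`)
maximizes the second-order power derivative at `θ₀`. -/
theorem lmpu_test_optimal
    {Ω : Type*} [MeasurableSpace Ω] (μ : Measure Ω) (θ₀ : ℝ)
    (f : ℝ → Ω → ℝ) (f' : ℝ → Ω → ℝ) (f'' : Ω → ℝ)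
    (hpos : ∀ x, 0 < f θ₀ x)
    (hd1 : ∀ x, ∀ᶠ θ in 𝓝 θ₀, HasDerivAt (fun t => f t x) (f' θ x) θ)
    (hd2 : ∀ x, HasDerivAt (fun θ => f' θ x) (f'' x) θ₀)
    (hint0 : Integrable (f θ₀) μ) (hint1 : Integrable (f' θ₀) μ)
    (hint2 : Integrable f'' μ)
    (κ₁ κ₂ : ℝ)
    (S : Set Ω)
    (hS : S = {x | f'' x / f θ₀ x > κ₂ * (f' θ₀ x / f θ₀ x) + κ₁})
    (hSm : MeasurableSet S)
    (Φ : Ω → ℝ) (hΦ : Φ = S.indicator (fun _ => (1 : ℝ)))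
    (ψ : Ω → ℝ) (hψm : Measurable ψ)
    (hψ0 : ∀ x, 0 ≤ ψ x) (hψ1 : ∀ x, ψ x ≤ 1)
    (hi1 : Integrable (fun x => ψ x * f θ₀ x) μ)
    (hi2 : Integrable (fun x => ψ x * f' θ₀ x) μ)
    (hi3 : Integrable (fun x => ψ x * f'' x) μ)
    (he1 : ∫ x, ψ x * f θ₀ x ∂μ = ∫ x, Φ x * f θ₀ x ∂μ)
    (he2 : ∫ x, ψ x * f' θ₀ x ∂μ = ∫ x, Φ x * f' θ₀ x ∂μ) :
    ∫ x, ψ x * f'' x ∂μ ≤ ∫ x, Φ x * f'' x ∂μ := by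
  -- integrability of Φ·h
  have hΦeq : ∀ h : Ω → ℝ, (fun x => Φ x * h x) = S.indicator h := by
    intro h
    funext x
    by_cases hx : x ∈ S <;> simp [hΦ, hx]
  have hiΦ0 : Integrable (fun x => Φ x * f θ₀ x) μ := by
    rw [hΦeq]; exact hint0.indicator hSm
  have hiΦ1 : Integrable (fun x => Φ x * f' θ₀ x) μ := by
    rw [hΦeq]; exact hint1.indicator hSm
  have hiΦ2 : Integrable (fun x => Φ x * f'' x) μ := by
    rw [hΦeq]; exact hint2.indicator hSm
  set g : Ω → ℝ := fun x => (Φ x - ψ x) * (f'' x - κ₂ * f' θ₀ x - κ₁ * f θ₀ x)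
    with hg
  have hgeq : g = fun x =>
      (Φ x * f'' x - ψ x * f'' x) - κ₂ * (Φ x * f' θ₀ x - ψ x * f' θ₀ x)
        - κ₁ * (Φ x * f θ₀ x - ψ x * f θ₀ x) := by
    funext x; simp only [hg]; ring
  have hgint : Integrable g μ := by
    rw [hgeq]
    exact ((hiΦ2.sub hi3).sub (((hiΦ1.sub hi2)).const_mul κ₂)).sub
      (((hiΦ0.sub hi1)).const_mul κ₁)
  have hgpt : ∀ x, 0 ≤ g x := by
    intro x
    have hc := hpos x
    by_cases hx : x ∈ S
    · have h1 : Φ x = 1 := by simp [hΦ, hx]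
      have hx' : κ₂ * (f' θ₀ x / f θ₀ x) + κ₁ < f'' x / f θ₀ x := by
        rw [hS] at hx; exact hx
      rw [lt_div_iff₀ hc] at hx'
      have hdm : f' θ₀ x / f θ₀ x * f θ₀ x = f' θ₀ x := div_mul_cancel₀ _ hc.ne'
      rw [add_mul, mul_assoc, hdm] at hx'
      have h2 : 0 ≤ f'' x - κ₂ * f' θ₀ x - κ₁ * f θ₀ x := by linarith
      have h3 : 0 ≤ Φ x - ψ x := by rw [h1]; linarith [hψ1 x]
      exact mul_nonneg h3 h2
    · have h1 : Φ x = 0 := by simp [hΦ, hx]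
      have hx' : ¬ (κ₂ * (f' θ₀ x / f θ₀ x) + κ₁ < f'' x / f θ₀ x) := by
        rw [hS] at hx; exact hx
      push_neg at hx'
      rw [div_le_iff₀ hc] at hx'
      have hdm : f' θ₀ x / f θ₀ x * f θ₀ x = f' θ₀ x := div_mul_cancel₀ _ hc.ne'
      rw [add_mul, mul_assoc, hdm] at hx'
      have h2 : f'' x - κ₂ * f' θ₀ x - κ₁ * f θ₀ x ≤ 0 := by linarith
      have h3 : Φ x - ψ x ≤ 0 := by rw [h1]; linarith [hψ0 x]
      have h4 := mul_nonneg (neg_nonneg.mpr h3) (neg_nonneg.mpr h2)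
      have h5 : g x = -(Φ x - ψ x) * -(f'' x - κ₂ * f' θ₀ x - κ₁ * f θ₀ x) := by
        simp only [hg]; ring
      rw [h5]; exact h4
  have h0 : 0 ≤ ∫ x, g x ∂μ := integral_nonneg hgpt
  have hval : ∫ x, g x ∂μ =
      ((∫ x, Φ x * f'' x ∂μ) - ∫ x, ψ x * f'' x ∂μ)
        - κ₂ * ((∫ x, Φ x * f' θ₀ x ∂μ) - ∫ x, ψ x * f' θ₀ x ∂μ)
        - κ₁ * ((∫ x, Φ x * f θ₀ x ∂μ) - ∫ x, ψ x * f θ₀ x ∂μ) := by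
    have A : Integrable (fun x => Φ x * f'' x - ψ x * f'' x) μ := hiΦ2.sub hi3
    have B : Integrable (fun x => κ₂ * (Φ x * f' θ₀ x - ψ x * f' θ₀ x)) μ :=
      (hiΦ1.sub hi2).const_mul κ₂
    have C : Integrable (fun x => κ₁ * (Φ x * f θ₀ x - ψ x * f θ₀ x)) μ :=
      (hiΦ0.sub hi1).const_mul κ₁
    have AB : Integrable (fun x =>
        (Φ x * f'' x - ψ x * f'' x) - κ₂ * (Φ x * f' θ₀ x - ψ x * f' θ₀ x)) μ :=
      A.sub B
    rw [hgeq, integral_sub AB C, integral_sub A B, integral_sub hiΦ2 hi3,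
      integral_const_mul, integral_sub hiΦ1 hi2, integral_const_mul,
      integral_sub hiΦ0 hi1]
  rw [hval, ← he1, ← he2] at h0
  simp only [sub_self, mul_zero, sub_zero] at h0
  linarith
end

section
/- Let N ≥ 1 and M ≥ 1 be integers, let γ ∈ ℝ, ω₀ ∈ ℝ with ω₀ ≠ 0, and for ω ∈ ℝ define the steering vector s(ω) ∈ ℂ^N by s(ω)_n = exp(i γ (ω/ω₀) n) for n = 0, …, N−1. For observations x_m ∈ ℂ^N, complex amplitudes A_m ∈ ℂ, and noise variances σ_m² > 0 (m = 1, …, M), define L : ℝ → ℝ by L(Δ) = −Σ_{m=1}^{M} σ_m^{−2} ‖x_m − A_m s(ω₀ + Δ)‖², where ‖·‖ is the Euclidean norm on ℂ^N. Then L is twice differentiable at Δ = 0 with L''(0) = −2 Σ_{m=1}^{M} (γ²/(ω₀² σ_m²)) · Re( A_m Σ_{n=0}^{N−1} n² · conj(x_m[n]) · exp(i γ n) ). -/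
open Complex Finset Topology Filter

private lemma aux_norm_sq (x A : ℂ) (θ : ℝ) :
    ‖x - A * Complex.exp ((θ:ℂ) * Complex.I)‖ ^ 2 =
    ‖x‖^2 + ‖A‖^2 -
      2 * (((starRingEnd ℂ) x * A).re * Real.cos θ - ((starRingEnd ℂ) x * A).im * Real.sin θ) := by
  rw [Complex.exp_mul_I]
  rw [Complex.sq_norm, Complex.sq_norm, Complex.sq_norm]
  simp only [Complex.normSq_apply, Complex.sub_re, Complex.sub_im, Complex.mul_re,
    Complex.mul_im, Complex.add_re, Complex.add_im,
    Complex.ofReal_re, Complex.ofReal_im, Complex.cos_ofReal_re, Complex.sin_ofReal_re,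
    Complex.cos_ofReal_im, Complex.sin_ofReal_im,
    Complex.I_re, Complex.I_im, Complex.conj_re, Complex.conj_im]
  nlinarith [Real.sin_sq_add_cos_sq θ]

private lemma aux_hasDeriv (p q a b t : ℝ) :
    HasDerivAt (fun u => p * Real.cos (a + b*u) - q * Real.sin (a + b*u))
      ((-(q*b)) * Real.cos (a + b*t) - (p*b) * Real.sin (a + b*t)) t := by
  have h1 : HasDerivAt (fun u : ℝ => a + b*u) b t := by
    simpa using ((hasDerivAt_id t).const_mul b).const_add a
  have hc := (Real.hasDerivAt_cos (a + b*t)).comp t h1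
  have hsn := (Real.hasDerivAt_sin (a + b*t)).comp t h1
  have := (hc.const_mul p).sub (hsn.const_mul q)
  rw [show (-(q*b)) * Real.cos (a + b*t) - (p*b) * Real.sin (a + b*t)
      = p * (-Real.sin (a + b * t) * b) - q * (Real.cos (a + b * t) * b) by ring]
  exact this

/-- Second-derivative formula (19): the reduced Gaussian log-likelihood
`L(Δ) = −Σ_m σ_m⁻² ‖x_m − A_m s(ω₀+Δ)‖²` of the frequency-deviation model
is twice differentiable at `Δ = 0` with
`L''(0) = −2 Σ_m (γ²/(ω₀² σ_m²)) Re(A_m Σ_n n² · conj(x_m[n]) e^{iγn})`. -/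
theorem loglikelihood_second_deriv_at_zero
    (N M : ℕ) (hN : 1 ≤ N) (hM : 1 ≤ M)
    (γ ω₀ : ℝ) (hω₀ : ω₀ ≠ 0)
    (s : ℝ → Fin N → ℂ)
    (hs : ∀ ω n, s ω n = Complex.exp (Complex.I * (γ : ℂ) * ((ω / ω₀ : ℝ) : ℂ) * ((n : ℕ) : ℂ)))
    (x : Fin M → Fin N → ℂ) (A : Fin M → ℂ)
    (σsq : Fin M → ℝ) (hσ : ∀ m, 0 < σsq m)
    (L : ℝ → ℝ)
    (hL : ∀ Δ, L Δ = -∑ m, (σsq m)⁻¹ * ∑ n, ‖x m n - A m * s (ω₀ + Δ) n‖ ^ 2) :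
    (∀ᶠ Δ in 𝓝 (0 : ℝ), DifferentiableAt ℝ L Δ) ∧
      HasDerivAt (deriv L)
        (-2 * ∑ m, (γ ^ 2 / (ω₀ ^ 2 * σsq m)) *
          (A m * ∑ n : Fin N, ((n : ℕ) : ℂ) ^ 2 * (starRingEnd ℂ) (x m n) *
            Complex.exp (Complex.I * (γ : ℂ) * ((n : ℕ) : ℂ))).re)
        0 := by
  have hω₀C : (ω₀ : ℂ) ≠ 0 := Complex.ofReal_ne_zero.mpr hω₀
  set c : Fin M → Fin N → ℂ := fun m n => (starRingEnd ℂ) (x m n) * A m with hc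
  -- step 1: explicit form of L
  have key : L = fun Δ =>
      (-∑ m, (σsq m)⁻¹ * ∑ n : Fin N, (‖x m n‖^2 + ‖A m‖^2)) +
      ∑ m, ∑ n : Fin N,
        (2 * (σsq m)⁻¹) *
          ((c m n).re * Real.cos (γ * n + (γ * n / ω₀) * Δ)
           - (c m n).im * Real.sin (γ * n + (γ * n / ω₀) * Δ)) := by
    funext Δ
    rw [hL]
    have hterm : ∀ (m : Fin M) (n : Fin N),
        ‖x m n - A m * s (ω₀ + Δ) n‖ ^ 2 =
        (‖x m n‖^2 + ‖A m‖^2) -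
          2 * ((c m n).re * Real.cos (γ * n + (γ * n / ω₀) * Δ)
             - (c m n).im * Real.sin (γ * n + (γ * n / ω₀) * Δ)) := by
      intro m n
      have hang : Complex.I * (γ : ℂ) * (((ω₀ + Δ) / ω₀ : ℝ) : ℂ) * ((n : ℕ) : ℂ)
          = ((γ * n + (γ * n / ω₀) * Δ : ℝ) : ℂ) * Complex.I := by
        push_cast
        field_simp
      rw [hs, hang, aux_norm_sq]
    calc -∑ m, (σsq m)⁻¹ * ∑ n, ‖x m n - A m * s (ω₀ + Δ) n‖ ^ 2
        = -∑ m, (σsq m)⁻¹ * ∑ n : Fin N,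
            ((‖x m n‖^2 + ‖A m‖^2) -
              2 * ((c m n).re * Real.cos (γ * n + (γ * n / ω₀) * Δ)
                 - (c m n).im * Real.sin (γ * n + (γ * n / ω₀) * Δ))) := by
          congr 1; apply Finset.sum_congr rfl; intro m _; congr 1
          exact Finset.sum_congr rfl fun n _ => hterm m n
      _ = _ := by
          have hsplit : ∀ m : Fin M, (σsq m)⁻¹ * ∑ n : Fin N,
              ((‖x m n‖^2 + ‖A m‖^2) -
                2 * ((c m n).re * Real.cos (γ * n + (γ * n / ω₀) * Δ)
                   - (c m n).im * Real.sin (γ * n + (γ * n / ω₀) * Δ)))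
              = (σsq m)⁻¹ * (∑ n : Fin N, (‖x m n‖^2 + ‖A m‖^2)) -
                ∑ n : Fin N, (2 * (σsq m)⁻¹) *
                  ((c m n).re * Real.cos (γ * n + (γ * n / ω₀) * Δ)
                   - (c m n).im * Real.sin (γ * n + (γ * n / ω₀) * Δ)) := by
            intro m
            rw [Finset.sum_sub_distrib, mul_sub]
            congr 1
            rw [Finset.mul_sum]
            exact Finset.sum_congr rfl fun n _ => by ring
          rw [Finset.sum_congr rfl (fun m _ => hsplit m), Finset.sum_sub_distrib,
            neg_sub, sub_eq_neg_add]
  -- step 2: first derivative everywhere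
  have hg : ∀ Δ : ℝ, HasDerivAt L
      (∑ m, ∑ n : Fin N,
        (2 * (σsq m)⁻¹) *
          ((-((c m n).im * (γ * n / ω₀))) * Real.cos (γ * n + (γ * n / ω₀) * Δ)
           - ((c m n).re * (γ * n / ω₀)) * Real.sin (γ * n + (γ * n / ω₀) * Δ))) Δ := by
    intro Δ
    rw [key]
    apply HasDerivAt.const_add
    apply HasDerivAt.fun_sum
    intro m _
    apply HasDerivAt.fun_sum
    intro n _
    exact HasDerivAt.const_mul _ (aux_hasDeriv _ _ _ _ Δ)
  have hderivL : deriv L = fun Δ =>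
      ∑ m, ∑ n : Fin N,
        (2 * (σsq m)⁻¹) *
          ((-((c m n).im * (γ * n / ω₀))) * Real.cos (γ * n + (γ * n / ω₀) * Δ)
           - ((c m n).re * (γ * n / ω₀)) * Real.sin (γ * n + (γ * n / ω₀) * Δ)) :=
    funext fun Δ => (hg Δ).deriv
  refine ⟨Filter.Eventually.of_forall fun Δ => (hg Δ).differentiableAt, ?_⟩
  rw [hderivL]
  -- step 3: second derivative at 0
  have hg2 : HasDerivAt (fun Δ =>
      ∑ m, ∑ n : Fin N,
        (2 * (σsq m)⁻¹) *
          ((-((c m n).im * (γ * n / ω₀))) * Real.cos (γ * n + (γ * n / ω₀) * Δ)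
           - ((c m n).re * (γ * n / ω₀)) * Real.sin (γ * n + (γ * n / ω₀) * Δ)))
      (∑ m, ∑ n : Fin N,
        (2 * (σsq m)⁻¹) *
          ((-(((c m n).re * (γ * n / ω₀)) * (γ * n / ω₀))) * Real.cos (γ * n + (γ * n / ω₀) * 0)
           - ((-((c m n).im * (γ * n / ω₀))) * (γ * n / ω₀)) * Real.sin (γ * n + (γ * n / ω₀) * 0)))
      0 := by
    apply HasDerivAt.fun_sum
    intro m _
    apply HasDerivAt.fun_sum
    intro n _
    exact HasDerivAt.const_mul _ (aux_hasDeriv _ _ _ _ 0)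
  convert hg2 using 1
  -- step 4: value identification
  have hre : ∀ m : Fin M,
      (A m * ∑ n : Fin N, ((n : ℕ) : ℂ) ^ 2 * (starRingEnd ℂ) (x m n) *
        Complex.exp (Complex.I * (γ : ℂ) * ((n : ℕ) : ℂ))).re
      = ∑ n : Fin N, ((n : ℝ))^2 *
          ((c m n).re * Real.cos (γ * n) - (c m n).im * Real.sin (γ * n)) := by
    intro m
    rw [Finset.mul_sum, Complex.re_sum]
    apply Finset.sum_congr rfl
    intro n _
    have h2 : Complex.I * (γ:ℂ) * ((n : ℕ):ℂ) = ((γ * n : ℝ):ℂ) * Complex.I := by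
      push_cast; ring
    have h3 : ((n : ℕ):ℂ)^2 = ((((n:ℕ):ℝ)^2 : ℝ):ℂ) := by push_cast; ring
    rw [h2, h3, Complex.exp_mul_I]
    simp only [hc, Complex.mul_re, Complex.mul_im, Complex.add_re, Complex.add_im,
      Complex.ofReal_re, Complex.ofReal_im, Complex.cos_ofReal_re, Complex.sin_ofReal_re,
      Complex.cos_ofReal_im, Complex.sin_ofReal_im, Complex.I_re, Complex.I_im,
      Complex.conj_re, Complex.conj_im]
    push_cast
    ring
  simp only [hre]
  rw [Finset.mul_sum]
  apply Finset.sum_congr rfl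
  intro m _
  rw [Finset.mul_sum, Finset.mul_sum]
  apply Finset.sum_congr rfl
  intro n _
  have hσm := (hσ m).ne'
  simp only [mul_zero, add_zero]
  field_simp
  ring
end
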